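/- Let m be a positive integer, K ≥ 0 and α > 0 real numbers, and set θ₀ = α(K+1)/(m + α(K+1)) ∈ (0,1). Then O_{L,N}(α) = ∫₀^∞ f_G(x, m) (∫₀^{αx} f_R(y, K) dy) dx satisfies O_{L,N}(α) = 1 − (m^m e^{−K} / (Γ(m) (m + α(K+1))^m)) · D^{m−1}[ θ ↦ θ^{m−1} (e^K − θ e^{Kθ}) / (1 − θ) ](θ₀), where D^{m−1} denotes the (m−1)-st derivative with respect to θ. -/

import Mathlib

open Real MeasureTheory Set Finset Topology Filter

/-- Modified Bessel function of the first kind of order zero. -/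
noncomputable def besselI0 (z : ℝ) : ℝ :=
  ∑' k : ℕ, (z / 2) ^ (2 * k) / ((Nat.factorial k : ℝ)) ^ 2

/-- Unit-mean Nakagami-m (Gamma) density with shape parameter `s`. -/
noncomputable def fG (s x : ℝ) : ℝ :=
  if 0 < x then s ^ s * x ^ (s - 1) * Real.exp (-s * x) / Real.Gamma s else 0

/-- Unit-mean Rician density with shape factor `K`. -/
noncomputable def fR (K y : ℝ) : ℝ :=
  if 0 < y then
    (K + 1) * Real.exp (-K - (K + 1) * y) * besselI0 (Real.sqrt (4 * K * (K + 1) * y))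
  else 0

namespace OutageAux

noncomputable def Q (n : ℕ) (K : ℝ) (N k : ℕ) (θ : ℝ) : ℝ :=
  K ^ k / (Nat.factorial k : ℝ) *
    ∑ j ∈ Finset.range (k + 1), ((n + j).descFactorial N : ℝ) * θ ^ (n + j - N)

noncomputable def u (n : ℕ) (K : ℝ) (k : ℕ) : ℝ :=
  K ^ k / (Nat.factorial k : ℝ) * ((k + 1) * ((n : ℝ) + 1 + k) ^ n)

noncomputable def W (K t : ℝ) : ℝ :=
  Real.exp (-K) * ∑' k : ℕ, K ^ k / (Nat.factorial k : ℝ) *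
    (Real.exp (-((K + 1) * t)) * ∑ j ∈ Finset.range (k + 1),
      (K + 1) ^ j * t ^ j / (Nat.factorial j : ℝ))

lemma exp_tsum (x : ℝ) : Real.exp x = ∑' k : ℕ, x ^ k / (Nat.factorial k : ℝ) := by
  rw [Real.exp_eq_exp_ℝ, NormedSpace.exp_eq_tsum_div]

lemma integrableOn_pow_exp (N : ℕ) {b : ℝ} (hb : 0 < b) :
    IntegrableOn (fun x => x ^ N * Real.exp (-(b * x))) (Set.Ioi 0) := by
  have := integrableOn_rpow_mul_exp_neg_mul_rpow (p := 1) (s := N) (b := b)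
    (by linarith [Nat.cast_nonneg (α:=ℝ) N] : (-1:ℝ) < N) one_pos hb
  refine this.congr_fun (fun x hx => ?_) measurableSet_Ioi
  beta_reduce
  rw [Real.rpow_one, Real.rpow_natCast]; ring_nf

lemma integral_pow_exp (N : ℕ) {b : ℝ} (hb : 0 < b) :
    ∫ x in Set.Ioi (0 : ℝ), x ^ N * Real.exp (-(b * x)) = (Nat.factorial N : ℝ) / b ^ (N + 1) := by
  have h := Real.integral_rpow_mul_exp_neg_mul_Ioi (a := (N:ℝ)+1) (r := b) (by positivity) hb
  have h2 : ∀ x ∈ Set.Ioi (0:ℝ), x ^ (((N:ℝ)+1) - 1) * Real.exp (-(b * x))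
      = x ^ N * Real.exp (-(b * x)) := by
    intro x hx
    rw [show ((N:ℝ)+1)-1 = (N:ℝ) by ring, Real.rpow_natCast]
  rw [setIntegral_congr_fun measurableSet_Ioi h2] at h
  rw [h, show ((N:ℝ)+1) = ((N+1:ℕ):ℝ) by push_cast; ring, Real.rpow_natCast,
    show ((N+1:ℕ):ℝ) = (N:ℝ)+1 by push_cast; ring, Real.Gamma_nat_eq_factorial]
  field_simp
  rw [← mul_pow, one_div_mul_cancel hb.ne', one_pow]

lemma summable_u {K : ℝ} (hK : 0 ≤ K) (n : ℕ) : Summable (u n K) := by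
  set w : ℕ → ℝ := fun k => ((n : ℝ) + 1 + k) ^ (n + 1) * (K + 1) ^ k / (Nat.factorial k : ℝ)
    with hw
  have hwpos : ∀ k, 0 < w k := fun k => by positivity
  have hsw : Summable w := by
    apply summable_of_ratio_test_tendsto_lt_one (l := 0) one_pos
      (Eventually.of_forall fun k => (hwpos k).ne')
    have key : ∀ k : ℕ, ‖w (k+1)‖ / ‖w k‖
        = (((n:ℝ) + 1 + (k+1)) / ((n:ℝ) + 1 + k)) ^ (n+1) * ((K+1) / ((k:ℝ)+1)) := by
      intro k
      rw [Real.norm_of_nonneg (hwpos _).le, Real.norm_of_nonneg (hwpos _).le, hw]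
      simp only [Nat.factorial_succ]
      push_cast
      rw [div_pow]
      have h1 : ((n:ℝ) + 1 + k) ≠ 0 := by positivity
      have h2 : (Nat.factorial k : ℝ) ≠ 0 := by positivity
      have h3 : ((k:ℝ)+1) ≠ 0 := by positivity
      field_simp
      ring
    simp only [key]
    have l1 : Tendsto (fun k : ℕ => (((n:ℝ) + 1 + (k+1)) / ((n:ℝ) + 1 + k)) ^ (n+1))
        atTop (𝓝 1) := by
      have : Tendsto (fun k : ℕ => ((n:ℝ) + 1 + (k+1)) / ((n:ℝ) + 1 + k)) atTop (𝓝 1) := by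
        have he : ∀ k : ℕ, ((n:ℝ) + 1 + (k+1)) / ((n:ℝ) + 1 + k)
            = 1 + ((n:ℝ) + 1 + k)⁻¹ := by
          intro k
          have h1 : ((n:ℝ) + 1 + k) ≠ 0 := by positivity
          field_simp
          ring
        simp only [he]
        have : Tendsto (fun k : ℕ => ((n:ℝ) + 1 + k)⁻¹) atTop (𝓝 0) := by
          apply Tendsto.inv_tendsto_atTop
          exact tendsto_atTop_add_const_left _ _ tendsto_natCast_atTop_atTop
        simpa using tendsto_const_nhds.add this
      simpa using this.pow (n+1)
    have l2 : Tendsto (fun k : ℕ => (K+1) / ((k:ℝ)+1)) atTop (𝓝 0) := by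
      apply Tendsto.div_atTop tendsto_const_nhds
      exact tendsto_atTop_add_const_right _ _ tendsto_natCast_atTop_atTop
    simpa using l1.mul l2
  apply Summable.of_nonneg_of_le (fun k => ?_) (fun k => ?_) hsw
  · have h1 := pow_nonneg hK k
    have h2 : (0:ℝ) < (Nat.factorial k : ℝ) := by positivity
    have h3 : (0:ℝ) ≤ ((k:ℝ) + 1) * ((n : ℝ) + 1 + k) ^ n := by positivity
    exact mul_nonneg (div_nonneg h1 h2.le) h3
  have h1 : K ^ k ≤ (K + 1) ^ k := pow_le_pow_left₀ hK (by linarith) k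
  have h2 : ((k:ℝ) + 1) * ((n : ℝ) + 1 + k) ^ n ≤ ((n : ℝ) + 1 + k) ^ (n+1) := by
    rw [pow_succ]
    have : ((k:ℝ) + 1) ≤ ((n : ℝ) + 1 + k) := by
      have := Nat.cast_nonneg (α := ℝ) n; linarith
    nlinarith [pow_nonneg (by positivity : (0:ℝ) ≤ (n : ℝ) + 1 + k) n]
  calc u n K k = K ^ k * (((k:ℝ) + 1) * ((n : ℝ) + 1 + k) ^ n) / (Nat.factorial k : ℝ) := by
        rw [u]; push_cast; ring
    _ ≤ (K+1) ^ k * ((n : ℝ) + 1 + k) ^ (n+1) / (Nat.factorial k : ℝ) := by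
        apply div_le_div_of_nonneg_right ?_ (by positivity)
        apply mul_le_mul h1 h2 (by positivity) (by positivity)
    _ = w k := by rw [hw]; ring

lemma norm_Q_le {n : ℕ} {K : ℝ} (hK : 0 ≤ K) {N : ℕ} (hN : N ≤ n) (k : ℕ) {θ : ℝ}
    (hθ : |θ| ≤ 1) : ‖Q n K N k θ‖ ≤ u n K k := by
  rw [Q, u]
  have h0 : (0:ℝ) < (Nat.factorial k : ℝ) := by positivity
  rw [norm_mul]
  apply mul_le_mul ?_ ?_ (norm_nonneg _) (by positivity)
  · rw [Real.norm_of_nonneg (by positivity)]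
  · calc ‖∑ j ∈ Finset.range (k + 1), ((n + j).descFactorial N : ℝ) * θ ^ (n + j - N)‖
        ≤ ∑ j ∈ Finset.range (k + 1), ‖((n + j).descFactorial N : ℝ) * θ ^ (n + j - N)‖ :=
          norm_sum_le _ _
      _ ≤ ∑ j ∈ Finset.range (k + 1), ((n : ℝ) + 1 + k) ^ n := by
          apply Finset.sum_le_sum
          intro j hj
          rw [Finset.mem_range] at hj
          rw [norm_mul]
          have hb : ‖θ ^ (n + j - N)‖ ≤ 1 := by
            rw [norm_pow]
            exact pow_le_one₀ (norm_nonneg _) hθ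
          have hd : ‖((n + j).descFactorial N : ℝ)‖ ≤ ((n : ℝ) + 1 + k) ^ n := by
            rw [Real.norm_of_nonneg (by positivity)]
            have h1 : (n + j).descFactorial N ≤ (n + j) ^ N := Nat.descFactorial_le_pow _ _
            have h2 : (n + j) ^ N ≤ (n + 1 + k) ^ n := by
              calc (n + j) ^ N ≤ (n + 1 + k) ^ N :=
                    Nat.pow_le_pow_left (by omega) N
                _ ≤ (n + 1 + k) ^ n := Nat.pow_le_pow_right (by omega) hN
            calc ((n + j).descFactorial N : ℝ) ≤ ((n + 1 + k : ℕ) ^ n : ℕ) := by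
                  exact_mod_cast h1.trans h2
              _ = ((n : ℝ) + 1 + k) ^ n := by push_cast; ring
          calc ‖((n + j).descFactorial N : ℝ)‖ * ‖θ ^ (n + j - N)‖
              ≤ ((n : ℝ) + 1 + k) ^ n * 1 :=
                mul_le_mul hd hb (norm_nonneg _) (by positivity)
            _ = ((n : ℝ) + 1 + k) ^ n := by ring
      _ = ((k:ℝ) + 1) * ((n : ℝ) + 1 + k) ^ n := by
          rw [Finset.sum_const, Finset.card_range, nsmul_eq_mul]; push_cast; ring

lemma hasDerivAt_Q {n : ℕ} {K : ℝ} {N : ℕ} (hN : N + 1 ≤ n) (k : ℕ) (θ : ℝ) :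
    HasDerivAt (Q n K N k) (Q n K (N + 1) k θ) θ := by
  unfold Q
  apply HasDerivAt.const_mul
  apply HasDerivAt.fun_sum
  intro j hj
  have he : n + j - N = (n + j - (N + 1)) + 1 := by omega
  have h := (hasDerivAt_pow (n + j - N) θ).const_mul ((n + j).descFactorial N : ℝ)
  convert h using 1
  · rfl
  rw [Nat.descFactorial_succ]
  have hc : (n + j - N : ℕ) = ((n + j : ℕ) : ℝ) - (N : ℝ) := by
    push_cast [Nat.cast_sub (by omega : N ≤ n + j)]; ring
  rw [he]
  push_cast [Nat.cast_sub (by omega : N ≤ n + j), Nat.cast_sub (by omega : N + 1 ≤ n + j)]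
  ring_nf

lemma series_id {n : ℕ} {K : ℝ} (hK : 0 ≤ K) {θ : ℝ} (hθ : θ ∈ Set.Ioo (-1 : ℝ) 1) :
    θ ^ n * (Real.exp K - θ * Real.exp (K * θ)) / (1 - θ) = ∑' k, Q n K 0 k θ := by
  obtain ⟨h1, h2⟩ := hθ
  have hne : (1 : ℝ) - θ ≠ 0 := by intro h; nlinarith
  rw [eq_comm, eq_div_iff hne, ← tsum_mul_right]
  have hterm : ∀ k : ℕ, Q n K 0 k θ * (1 - θ)
      = θ ^ n * (K ^ k / (Nat.factorial k : ℝ)) - θ ^ n * (K ^ k * θ ^ (k+1) / (Nat.factorial k : ℝ)) := by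
    intro k
    rw [Q]
    simp only [Nat.descFactorial_zero, Nat.cast_one, one_mul, Nat.sub_zero]
    have hgeom : (∑ j ∈ Finset.range (k + 1), θ ^ (n + j)) * (1 - θ)
        = θ ^ n * (1 - θ ^ (k+1)) := by
      have : ∀ j ∈ Finset.range (k+1), θ ^ (n + j) = θ ^ n * θ ^ j := fun j _ => pow_add θ n j
      rw [Finset.sum_congr rfl this, ← Finset.mul_sum]
      have hg := geom_sum_mul θ (k+1)
      have : (∑ i ∈ Finset.range (k + 1), θ ^ i) * (1 - θ) = 1 - θ ^ (k+1) := by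
        have := geom_sum_mul θ (k+1)
        nlinarith [this]
      rw [mul_assoc, this]
    rw [mul_assoc, hgeom]
    ring
  rw [tsum_congr hterm]
  have s1 : Summable (fun k : ℕ => θ ^ n * (K ^ k / (Nat.factorial k : ℝ))) :=
    (Real.summable_pow_div_factorial K).mul_left _
  have s2 : Summable (fun k : ℕ => θ ^ n * (K ^ k * θ ^ (k+1) / (Nat.factorial k : ℝ))) := by
    have : ∀ k : ℕ, θ ^ n * (K ^ k * θ ^ (k+1) / (Nat.factorial k : ℝ))
        = (θ ^ n * θ) * ((K * θ) ^ k / (Nat.factorial k : ℝ)) := by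
      intro k; rw [mul_pow]; ring
    simpa only [this] using (Real.summable_pow_div_factorial (K * θ)).mul_left (θ ^ n * θ)
  rw [Summable.tsum_sub s1 s2, tsum_mul_left, tsum_mul_left, ← exp_tsum]
  have : (∑' k : ℕ, K ^ k * θ ^ (k+1) / (Nat.factorial k : ℝ))
      = θ * Real.exp (K * θ) := by
    have h : ∀ k : ℕ, K ^ k * θ ^ (k+1) / (Nat.factorial k : ℝ)
        = θ * ((K * θ) ^ k / (Nat.factorial k : ℝ)) := by
      intro k; rw [mul_pow]; ring
    rw [tsum_congr h, tsum_mul_left, ← exp_tsum]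
  rw [this]
  ring

lemma summable_Q {n : ℕ} {K : ℝ} (hK : 0 ≤ K) {N : ℕ} (hN : N ≤ n) {θ : ℝ}
    (hθ : |θ| ≤ 1) : Summable (fun k => Q n K N k θ) :=
  Summable.of_norm_bounded (summable_u hK n) (fun k => norm_Q_le hK hN k hθ)

lemma iteratedDeriv_g {n : ℕ} {K : ℝ} (hK : 0 ≤ K) {N : ℕ} (hN : N ≤ n) :
    ∀ θ ∈ Set.Ioo (-1 : ℝ) 1,
      iteratedDeriv N (fun θ : ℝ => θ ^ n * (Real.exp K - θ * Real.exp (K * θ)) / (1 - θ)) θ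
        = ∑' k, Q n K N k θ := by
  induction N with
  | zero =>
    intro θ hθ
    rw [iteratedDeriv_zero]
    exact series_id hK hθ
  | succ N ih =>
    intro θ hθ
    have habs : ∀ y ∈ Set.Ioo (-1:ℝ) 1, |y| ≤ 1 := fun y hy =>
      abs_le.mpr ⟨hy.1.le, hy.2.le⟩
    rw [iteratedDeriv_succ]
    have hev : iteratedDeriv N (fun θ : ℝ => θ ^ n * (Real.exp K - θ * Real.exp (K * θ)) / (1 - θ))
        =ᶠ[nhds θ] fun y => ∑' k, Q n K N k y := by
      filter_upwards [isOpen_Ioo.mem_nhds hθ] with y hy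
      exact ih (by omega) y hy
    rw [hev.deriv_eq]
    have hd := hasDerivAt_tsum_of_isPreconnected (summable_u hK n) isOpen_Ioo
      (convex_Ioo (-1:ℝ) 1).isPreconnected
      (fun k y hy => hasDerivAt_Q hN k y)
      (fun k y hy => norm_Q_le hK hN k (habs y hy))
      hθ (summable_Q hK (by omega) (habs θ hθ)) hθ
    exact hd.deriv

lemma integral_pow_exp_Ioo (N : ℕ) {c t : ℝ} (hc : 0 < c) (ht : 0 ≤ t) :
    ∫ y in Set.Ioo (0 : ℝ) t, y ^ N * Real.exp (-(c * y)) =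
      (Nat.factorial N : ℝ) / c ^ (N + 1) *
        (1 - Real.exp (-(c * t)) * ∑ j ∈ Finset.range (N + 1),
          c ^ j * t ^ j / (Nat.factorial j : ℝ)) := by
  set G : ℝ → ℝ := fun y => ∑ j ∈ Finset.range (N + 1), c ^ j * y ^ j / (Nat.factorial j : ℝ)
    with hGdef
  have hG : ∀ y : ℝ, HasDerivAt G (c * G y - c ^ (N+1) * y ^ N / (Nat.factorial N : ℝ)) y := by
    intro y
    have h1 : HasDerivAt G
        (∑ j ∈ Finset.range (N + 1), c ^ j * (j * y ^ (j-1)) / (Nat.factorial j : ℝ)) y := by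
      apply HasDerivAt.fun_sum
      intro j hj
      exact ((hasDerivAt_pow j y).const_mul (c ^ j)).div_const _
    convert h1 using 1
    rw [Finset.sum_range_succ' (fun j => c ^ j * (↑j * y ^ (j-1)) / (Nat.factorial j : ℝ)) N]
    simp only [Nat.cast_zero, zero_mul, mul_zero, zero_div, add_zero, pow_zero]
    have hcongr : ∀ i ∈ Finset.range N,
        c ^ (i+1) * ((↑(i+1) : ℝ) * y ^ (i+1-1)) / (Nat.factorial (i+1) : ℝ)
          = c * (c ^ i * y ^ i / (Nat.factorial i : ℝ)) := by
      intro i hi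
      rw [Nat.factorial_succ, Nat.add_sub_cancel]
      have h2 : (Nat.factorial i : ℝ) ≠ 0 := by positivity
      have h3 : ((i:ℝ) + 1) ≠ 0 := by positivity
      push_cast
      field_simp
      ring
    rw [Finset.sum_congr rfl hcongr, ← Finset.mul_sum, hGdef]
    simp only
    rw [Finset.sum_range_succ]
    ring
  have hF : ∀ y : ℝ, HasDerivAt
      (fun y => -((Nat.factorial N : ℝ) / c ^ (N+1)) * (Real.exp (-(c * y)) * G y))
      (y ^ N * Real.exp (-(c * y))) y := by
    intro y
    have he : HasDerivAt (fun y : ℝ => Real.exp (-(c * y))) (Real.exp (-(c * y)) * (-c)) y := by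
      have h1 : HasDerivAt (fun y : ℝ => -(c * y)) (-c) y := by
        have h0 : HasDerivAt (fun y : ℝ => c * y) c y := by
          simpa using (hasDerivAt_id y).const_mul c
        exact h0.neg
      exact h1.exp
    have hprod := (he.mul (hG y)).const_mul (-((Nat.factorial N : ℝ) / c ^ (N+1)))
    convert hprod using 1
    · rfl
    · rfl
    · rfl
    have h2 : (Nat.factorial N : ℝ) ≠ 0 := by positivity
    have h3 : c ≠ 0 := hc.ne'
    field_simp
    ring
  have key : ∫ y in Set.Ioo (0 : ℝ) t, y ^ N * Real.exp (-(c * y))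
      = (-((Nat.factorial N : ℝ) / c ^ (N+1)) * (Real.exp (-(c * t)) * G t))
        - (-((Nat.factorial N : ℝ) / c ^ (N+1)) * (Real.exp (-(c * 0)) * G 0)) := by
    rw [← MeasureTheory.integral_Ioc_eq_integral_Ioo, ← intervalIntegral.integral_of_le ht]
    exact intervalIntegral.integral_eq_sub_of_hasDerivAt (fun y _ => hF y)
      (Continuous.intervalIntegrable (by fun_prop) _ _)
  rw [key]
  have hG0 : G 0 = 1 := by
    rw [hGdef]
    simp only
    rw [Finset.sum_eq_single 0]
    · simp
    · intro j hj hjne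
      rw [zero_pow hjne, mul_zero, zero_div]
    · simp
  rw [hG0]
  simp only [mul_zero, neg_zero, Real.exp_zero, mul_one]
  ring

lemma expSum_le {x : ℝ} (hx : 0 ≤ x) (k : ℕ) :
    ∑ j ∈ Finset.range (k + 1), x ^ j / (Nat.factorial j : ℝ) ≤ Real.exp x := by
  rw [exp_tsum]
  exact Summable.sum_le_tsum (Finset.range (k+1)) (fun j _ => by positivity)
    (Real.summable_pow_div_factorial x)

lemma fR_series {K : ℝ} (hK : 0 ≤ K) {y : ℝ} (hy : 0 < y) :
    fR K y = ∑' k : ℕ, (Real.exp (-K) * (K + 1) ^ (k + 1) * K ^ k / ((Nat.factorial k : ℝ)) ^ 2)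
      * (y ^ k * Real.exp (-((K + 1) * y))) := by
  rw [fR, if_pos hy, besselI0]
  have hz : (0:ℝ) ≤ 4 * K * (K + 1) * y := by positivity
  have hsq : ∀ k : ℕ, (Real.sqrt (4 * K * (K + 1) * y) / 2) ^ (2 * k)
      = (K * (K + 1) * y) ^ k := by
    intro k
    rw [pow_mul]
    congr 1
    rw [div_pow, Real.sq_sqrt hz]
    ring
  rw [tsum_congr (fun k => by rw [hsq k])]
  rw [← tsum_mul_left]
  apply tsum_congr
  intro k
  have hexp : Real.exp (-K - (K + 1) * y) = Real.exp (-K) * Real.exp (-((K + 1) * y)) := by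
    rw [← Real.exp_add]; ring_nf
  rw [hexp, mul_pow, mul_pow]
  ring

lemma inner_eq {K : ℝ} (hK : 0 ≤ K) {t : ℝ} (ht : 0 < t) :
    ∫ y in Set.Ioo (0 : ℝ) t, fR K y = 1 - W K t := by
  have hc : (0:ℝ) < K + 1 := by linarith
  set a : ℕ → ℝ := fun k => Real.exp (-K) * (K + 1) ^ (k + 1) * K ^ k / ((Nat.factorial k : ℝ)) ^ 2
    with ha
  have ha_nonneg : ∀ k, 0 ≤ a k := fun k => by positivity
  have hcongr : ∀ y ∈ Set.Ioo (0:ℝ) t, fR K y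
      = ∑' k : ℕ, a k * (y ^ k * Real.exp (-((K + 1) * y))) :=
    fun y hy => fR_series hK hy.1
  rw [setIntegral_congr_fun measurableSet_Ioo hcongr]
  have h_int : ∀ k : ℕ, Integrable (fun y => a k * (y ^ k * Real.exp (-((K + 1) * y))))
      (volume.restrict (Set.Ioo (0:ℝ) t)) := by
    intro k
    exact (((integrableOn_pow_exp k hc).mono_set Set.Ioo_subset_Ioi_self).const_mul (a k))
  have h_nonneg : ∀ k : ℕ, ∀ y ∈ Set.Ioo (0:ℝ) t,
      0 ≤ a k * (y ^ k * Real.exp (-((K + 1) * y))) := by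
    intro k y hy
    have := hy.1.le
    have := ha_nonneg k
    positivity
  have h_val : ∀ k : ℕ, ∫ y in Set.Ioo (0:ℝ) t, a k * (y ^ k * Real.exp (-((K + 1) * y)))
      = Real.exp (-K) * (K ^ k / (Nat.factorial k : ℝ)) *
        (1 - Real.exp (-((K+1) * t)) * ∑ j ∈ Finset.range (k + 1),
          (K+1) ^ j * t ^ j / (Nat.factorial j : ℝ)) := by
    intro k
    rw [MeasureTheory.integral_const_mul, integral_pow_exp_Ioo k hc ht.le, ha]
    have h1 : ((Nat.factorial k : ℝ)) ≠ 0 := by positivity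
    have h2 : (K+1) ^ (k+1) ≠ 0 := by positivity
    field_simp
  have h_sum : Summable (fun k : ℕ =>
      ∫ y in Set.Ioo (0:ℝ) t, ‖a k * (y ^ k * Real.exp (-((K + 1) * y)))‖) := by
    apply Summable.of_nonneg_of_le (fun k => integral_nonneg fun y => norm_nonneg _)
      (fun k => ?_)
      (((Real.summable_pow_div_factorial K).mul_left (Real.exp (-K))))
    have : ∀ᵐ y ∂(volume.restrict (Set.Ioo (0:ℝ) t)),
        ‖a k * (y ^ k * Real.exp (-((K + 1) * y)))‖
          = a k * (y ^ k * Real.exp (-((K + 1) * y))) := by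
      filter_upwards [ae_restrict_mem measurableSet_Ioo] with y hy
      exact Real.norm_of_nonneg (h_nonneg k y hy)
    rw [integral_congr_ae this, h_val k]
    have hle1 : Real.exp (-((K+1) * t)) * ∑ j ∈ Finset.range (k + 1),
        (K+1) ^ j * t ^ j / (Nat.factorial j : ℝ) ≤ 1 := by
      have h3 : ∑ j ∈ Finset.range (k + 1), (K+1) ^ j * t ^ j / (Nat.factorial j : ℝ)
          ≤ Real.exp ((K+1) * t) := by
        have := expSum_le (mul_nonneg hc.le ht.le) k
        calc ∑ j ∈ Finset.range (k + 1), (K+1) ^ j * t ^ j / (Nat.factorial j : ℝ)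
            = ∑ j ∈ Finset.range (k + 1), ((K+1) * t) ^ j / (Nat.factorial j : ℝ) := by
              apply Finset.sum_congr rfl; intro j _; rw [mul_pow]
          _ ≤ Real.exp ((K+1) * t) := this
      calc Real.exp (-((K+1) * t)) * ∑ j ∈ Finset.range (k + 1),
            (K+1) ^ j * t ^ j / (Nat.factorial j : ℝ)
          ≤ Real.exp (-((K+1) * t)) * Real.exp ((K+1) * t) := by
            apply mul_le_mul_of_nonneg_left h3 (Real.exp_nonneg _)
        _ = 1 := by rw [← Real.exp_add]; simp
    have hge0 : 0 ≤ Real.exp (-((K+1) * t)) * ∑ j ∈ Finset.range (k + 1),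
        (K+1) ^ j * t ^ j / (Nat.factorial j : ℝ) := by
      have h4 : 0 ≤ ∑ j ∈ Finset.range (k + 1), (K+1) ^ j * t ^ j / (Nat.factorial j : ℝ) := by
        apply Finset.sum_nonneg; intro j _; positivity
      positivity
    have hKk : 0 ≤ Real.exp (-K) * (K ^ k / (Nat.factorial k : ℝ)) := by positivity
    nlinarith
  rw [← MeasureTheory.integral_tsum_of_summable_integral_norm h_int h_sum]
  rw [tsum_congr h_val]
  have s1 : Summable (fun k : ℕ => Real.exp (-K) * (K ^ k / (Nat.factorial k : ℝ))) :=
    (Real.summable_pow_div_factorial K).mul_left _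
  have s2 : Summable (fun k : ℕ => Real.exp (-K) * (K ^ k / (Nat.factorial k : ℝ)) *
      (Real.exp (-((K+1) * t)) * ∑ j ∈ Finset.range (k + 1),
        (K+1) ^ j * t ^ j / (Nat.factorial j : ℝ))) := by
    apply Summable.of_nonneg_of_le ?_ ?_ s1
    · intro k
      have h4 : 0 ≤ ∑ j ∈ Finset.range (k + 1), (K+1) ^ j * t ^ j / (Nat.factorial j : ℝ) := by
        apply Finset.sum_nonneg; intro j _; positivity
      positivity
    · intro k
      have h3 : ∑ j ∈ Finset.range (k + 1), (K+1) ^ j * t ^ j / (Nat.factorial j : ℝ)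
          ≤ Real.exp ((K+1) * t) := by
        have := expSum_le (mul_nonneg hc.le ht.le) k
        calc ∑ j ∈ Finset.range (k + 1), (K+1) ^ j * t ^ j / (Nat.factorial j : ℝ)
            = ∑ j ∈ Finset.range (k + 1), ((K+1) * t) ^ j / (Nat.factorial j : ℝ) := by
              apply Finset.sum_congr rfl; intro j _; rw [mul_pow]
          _ ≤ Real.exp ((K+1) * t) := this
      have h4 : 0 ≤ ∑ j ∈ Finset.range (k + 1), (K+1) ^ j * t ^ j / (Nat.factorial j : ℝ) := by
        apply Finset.sum_nonneg; intro j _; positivity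
      have hKk : 0 ≤ Real.exp (-K) * (K ^ k / (Nat.factorial k : ℝ)) := by positivity
      have : Real.exp (-((K+1) * t)) * ∑ j ∈ Finset.range (k + 1),
          (K+1) ^ j * t ^ j / (Nat.factorial j : ℝ) ≤ 1 := by
        calc Real.exp (-((K+1) * t)) * ∑ j ∈ Finset.range (k + 1),
              (K+1) ^ j * t ^ j / (Nat.factorial j : ℝ)
            ≤ Real.exp (-((K+1) * t)) * Real.exp ((K+1) * t) :=
              mul_le_mul_of_nonneg_left h3 (Real.exp_nonneg _)
          _ = 1 := by rw [← Real.exp_add]; simp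
      nlinarith
  have hsplit : ∀ k : ℕ, Real.exp (-K) * (K ^ k / (Nat.factorial k : ℝ)) *
      (1 - Real.exp (-((K+1) * t)) * ∑ j ∈ Finset.range (k + 1),
        (K+1) ^ j * t ^ j / (Nat.factorial j : ℝ))
      = Real.exp (-K) * (K ^ k / (Nat.factorial k : ℝ))
        - Real.exp (-K) * (K ^ k / (Nat.factorial k : ℝ)) *
          (Real.exp (-((K+1) * t)) * ∑ j ∈ Finset.range (k + 1),
            (K+1) ^ j * t ^ j / (Nat.factorial j : ℝ)) := by
    intro k; ring
  rw [tsum_congr hsplit, Summable.tsum_sub s1 s2]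
  have hone : (∑' k : ℕ, Real.exp (-K) * (K ^ k / (Nat.factorial k : ℝ))) = 1 := by
    rw [tsum_mul_left, ← exp_tsum, ← Real.exp_add]; simp
  rw [hone, W]
  congr 1
  have : ∀ k : ℕ, Real.exp (-K) * (K ^ k / (Nat.factorial k : ℝ)) *
      (Real.exp (-((K+1) * t)) * ∑ j ∈ Finset.range (k + 1),
        (K+1) ^ j * t ^ j / (Nat.factorial j : ℝ))
      = Real.exp (-K) * (K ^ k / (Nat.factorial k : ℝ) *
        (Real.exp (-((K+1) * t)) * ∑ j ∈ Finset.range (k + 1),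
          (K+1) ^ j * t ^ j / (Nat.factorial j : ℝ))) := by
    intro k; ring
  rw [tsum_congr this, tsum_mul_left]

lemma sumExp_bound {K : ℝ} (hK : 0 ≤ K) (t : ℝ) (k : ℕ) :
    ‖K ^ k / (Nat.factorial k : ℝ) *
      (Real.exp (-((K + 1) * t)) * ∑ j ∈ Finset.range (k + 1),
        (K + 1) ^ j * t ^ j / (Nat.factorial j : ℝ))‖
    ≤ K ^ k / (Nat.factorial k : ℝ) * (Real.exp (-((K+1) * t)) * Real.exp ((K+1) * |t|)) := by
  have hc : (0:ℝ) < K + 1 := by linarith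
  rw [norm_mul, norm_mul]
  have h1 : ‖K ^ k / (Nat.factorial k : ℝ)‖ = K ^ k / (Nat.factorial k : ℝ) :=
    Real.norm_of_nonneg (by positivity)
  have h2 : ‖Real.exp (-((K + 1) * t))‖ = Real.exp (-((K + 1) * t)) :=
    Real.norm_of_nonneg (Real.exp_nonneg _)
  rw [h1, h2]
  apply mul_le_mul_of_nonneg_left ?_ (by positivity)
  apply mul_le_mul_of_nonneg_left ?_ (Real.exp_nonneg _)
  calc ‖∑ j ∈ Finset.range (k + 1), (K + 1) ^ j * t ^ j / (Nat.factorial j : ℝ)‖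
      ≤ ∑ j ∈ Finset.range (k + 1), ‖(K + 1) ^ j * t ^ j / (Nat.factorial j : ℝ)‖ :=
        norm_sum_le _ _
    _ ≤ ∑ j ∈ Finset.range (k + 1), ((K+1) * |t|) ^ j / (Nat.factorial j : ℝ) := by
        apply Finset.sum_le_sum
        intro j _
        rw [norm_div, norm_mul, norm_pow, norm_pow, mul_pow]
        rw [Real.norm_of_nonneg hc.le, Real.norm_natCast]
        exact div_le_div_of_nonneg_right le_rfl (by positivity) |>.trans
          (by rw [Real.norm_eq_abs])
    _ ≤ Real.exp ((K+1) * |t|) := expSum_le (by positivity) k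

lemma summable_W_term {K : ℝ} (hK : 0 ≤ K) (t : ℝ) :
    Summable (fun k : ℕ => K ^ k / (Nat.factorial k : ℝ) *
      (Real.exp (-((K + 1) * t)) * ∑ j ∈ Finset.range (k + 1),
        (K + 1) ^ j * t ^ j / (Nat.factorial j : ℝ))) := by
  apply Summable.of_norm_bounded ?_ (sumExp_bound hK t)
  exact (Real.summable_pow_div_factorial K).mul_right _

lemma W_meas (K : ℝ) (hK : 0 ≤ K) : Measurable (W K) := by
  apply Measurable.const_mul ?_ (Real.exp (-K))
  apply measurable_of_tendsto_metrizable
    (f := fun N t => ∑ k ∈ Finset.range N, K ^ k / (Nat.factorial k : ℝ) *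
      (Real.exp (-((K + 1) * t)) * ∑ j ∈ Finset.range (k + 1),
        (K + 1) ^ j * t ^ j / (Nat.factorial j : ℝ)))
  · intro N
    apply Finset.measurable_sum
    intro k _
    apply Measurable.const_mul
    apply Measurable.mul
    · fun_prop
    · apply Finset.measurable_sum
      intro j _
      fun_prop
  · rw [tendsto_pi_nhds]
    intro t
    exact (summable_W_term hK t).hasSum.tendsto_sum_nat

lemma W_nonneg {K : ℝ} (hK : 0 ≤ K) {t : ℝ} (ht : 0 ≤ t) : 0 ≤ W K t := by
  apply mul_nonneg (Real.exp_nonneg _)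
  apply tsum_nonneg
  intro k
  have hc : (0:ℝ) < K + 1 := by linarith
  have h4 : 0 ≤ ∑ j ∈ Finset.range (k + 1), (K+1) ^ j * t ^ j / (Nat.factorial j : ℝ) := by
    apply Finset.sum_nonneg; intro j _; positivity
  positivity

lemma W_le_one {K : ℝ} (hK : 0 ≤ K) {t : ℝ} (ht : 0 ≤ t) : W K t ≤ 1 := by
  have hc : (0:ℝ) < K + 1 := by linarith
  rw [W]
  have hle : (∑' k : ℕ, K ^ k / (Nat.factorial k : ℝ) *
      (Real.exp (-((K + 1) * t)) * ∑ j ∈ Finset.range (k + 1),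
        (K + 1) ^ j * t ^ j / (Nat.factorial j : ℝ))) ≤ ∑' k : ℕ, K ^ k / (Nat.factorial k : ℝ) := by
    apply Summable.tsum_le_tsum ?_ (summable_W_term hK t) (Real.summable_pow_div_factorial K)
    intro k
    have h3 : ∑ j ∈ Finset.range (k + 1), (K+1) ^ j * t ^ j / (Nat.factorial j : ℝ)
        ≤ Real.exp ((K+1) * t) := by
      calc ∑ j ∈ Finset.range (k + 1), (K+1) ^ j * t ^ j / (Nat.factorial j : ℝ)
          = ∑ j ∈ Finset.range (k + 1), ((K+1) * t) ^ j / (Nat.factorial j : ℝ) := by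
            apply Finset.sum_congr rfl; intro j _; rw [mul_pow]
        _ ≤ Real.exp ((K+1) * t) := expSum_le (by positivity) k
    have h4 : 0 ≤ ∑ j ∈ Finset.range (k + 1), (K+1) ^ j * t ^ j / (Nat.factorial j : ℝ) := by
      apply Finset.sum_nonneg; intro j _; positivity
    have h5 : Real.exp (-((K+1) * t)) * ∑ j ∈ Finset.range (k + 1),
        (K+1) ^ j * t ^ j / (Nat.factorial j : ℝ) ≤ 1 := by
      calc Real.exp (-((K+1) * t)) * ∑ j ∈ Finset.range (k + 1),
            (K+1) ^ j * t ^ j / (Nat.factorial j : ℝ)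
          ≤ Real.exp (-((K+1) * t)) * Real.exp ((K+1) * t) :=
            mul_le_mul_of_nonneg_left h3 (Real.exp_nonneg _)
        _ = 1 := by rw [← Real.exp_add]; simp
    have hKk : (0:ℝ) ≤ K ^ k / (Nat.factorial k : ℝ) := by positivity
    nlinarith [Real.exp_nonneg (-((K+1)*t))]
  calc Real.exp (-K) * ∑' k : ℕ, K ^ k / (Nat.factorial k : ℝ) *
        (Real.exp (-((K + 1) * t)) * ∑ j ∈ Finset.range (k + 1),
          (K + 1) ^ j * t ^ j / (Nat.factorial j : ℝ))
      ≤ Real.exp (-K) * ∑' k : ℕ, K ^ k / (Nat.factorial k : ℝ) :=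
        mul_le_mul_of_nonneg_left hle (Real.exp_nonneg _)
    _ = 1 := by rw [← exp_tsum, ← Real.exp_add]; simp

lemma fG_eq (n : ℕ) {x : ℝ} (hx : 0 < x) :
    fG ((n : ℝ) + 1) x = (((n : ℝ) + 1) ^ (n + 1) / (Nat.factorial n : ℝ)) *
      (x ^ n * Real.exp (-(((n : ℝ) + 1) * x))) := by
  rw [fG, if_pos hx]
  have h1 : ((n:ℝ)+1) ^ ((n:ℝ)+1) = ((n:ℝ)+1) ^ (n+1 : ℕ) := by
    rw [← Real.rpow_natCast ((n:ℝ)+1) (n+1)]; push_cast; ring_nf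
  have h2 : x ^ (((n:ℝ)+1) - 1) = x ^ (n : ℕ) := by
    rw [← Real.rpow_natCast x n]; ring_nf
  rw [h1, h2, Real.Gamma_nat_eq_factorial]
  ring_nf

theorem lhs_eq {n : ℕ} {K α : ℝ} (hK : 0 ≤ K) (hα : 0 < α) :
    (∫ x in Set.Ioi (0 : ℝ), fG ((n : ℝ) + 1) x * ∫ y in Set.Ioo 0 (α * x), fR K y) =
      1 - (((n : ℝ) + 1) ^ (n + 1) * Real.exp (-K) /
        ((Nat.factorial n : ℝ) * (((n : ℝ) + 1) + α * (K + 1)) ^ (n + 1))) *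
        ∑' k, Q n K n k (α * (K + 1) / (((n : ℝ) + 1) + α * (K + 1))) := by
  have hM : (0:ℝ) < (n:ℝ) + 1 := by positivity
  have hc : (0:ℝ) < K + 1 := by linarith
  set B : ℝ := ((n : ℝ) + 1) + α * (K + 1) with hBdef
  have hB : 0 < B := by positivity
  set θ₀ : ℝ := α * (K + 1) / B with hθdef
  have hθ0 : 0 ≤ θ₀ := by positivity
  have hθ1 : θ₀ ≤ 1 := by
    rw [hθdef, div_le_one hB, hBdef]; linarith
  have hθabs : |θ₀| ≤ 1 := abs_le.mpr ⟨by linarith, hθ1⟩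
  set D : ℝ → ℝ := fun x => (((n : ℝ) + 1) ^ (n + 1) / (Nat.factorial n : ℝ)) *
    (x ^ n * Real.exp (-(((n : ℝ) + 1) * x))) with hDdef
  have hD_int : IntegrableOn D (Set.Ioi 0) := (integrableOn_pow_exp n hM).const_mul _
  have hD_nonneg : ∀ x ∈ Set.Ioi (0:ℝ), 0 ≤ D x := by
    intro x hx
    have hx0 : (0:ℝ) ≤ x := (le_of_lt hx)
    rw [hDdef]
    positivity
  have hstep1 : (∫ x in Set.Ioi (0 : ℝ), fG ((n : ℝ) + 1) x * ∫ y in Set.Ioo 0 (α * x), fR K y)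
      = ∫ x in Set.Ioi (0:ℝ), (D x - D x * W K (α * x)) := by
    apply setIntegral_congr_fun measurableSet_Ioi
    intro x hx
    simp only
    have hx0 : (0:ℝ) < x := hx
    rw [fG_eq n hx0, inner_eq hK (by positivity : (0:ℝ) < α * x)]
    rw [hDdef]; ring
  rw [hstep1]
  have hDW_int : IntegrableOn (fun x => D x * W K (α * x)) (Set.Ioi 0) := by
    apply Integrable.mono' hD_int
    · apply Measurable.aestronglyMeasurable
      apply Measurable.mul
      · rw [hDdef]; fun_prop
      · exact (W_meas K hK).comp (by fun_prop)
    · filter_upwards [ae_restrict_mem measurableSet_Ioi] with x hx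
      have hx0 : (0:ℝ) < x := hx
      have h1 := W_nonneg hK (t := α * x) (by positivity)
      have h2 := W_le_one hK (t := α * x) (by positivity)
      have h3 := hD_nonneg x hx
      rw [Real.norm_of_nonneg (mul_nonneg h3 h1)]
      nlinarith
  rw [MeasureTheory.integral_sub hD_int hDW_int]
  have hD1 : ∫ x in Set.Ioi (0:ℝ), D x = 1 := by
    rw [hDdef, MeasureTheory.integral_const_mul, integral_pow_exp n hM]
    have h1 : ((Nat.factorial n : ℝ)) ≠ 0 := by positivity
    field_simp
  rw [hD1]
  congr 1
  set T : ℕ → ℝ → ℝ := fun k x => D x * Real.exp (-K) *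
    (K ^ k / (Nat.factorial k : ℝ) * (Real.exp (-((K + 1) * (α * x))) *
      ∑ j ∈ Finset.range (k + 1), (K + 1) ^ j * (α * x) ^ j / (Nat.factorial j : ℝ)))
    with hTdef
  have hpt : ∀ x : ℝ, D x * W K (α * x) = ∑' k, T k x := by
    intro x
    rw [W, ← mul_assoc, ← tsum_mul_left]
  set Tf : ℕ → ℝ → ℝ := fun k x => ∑ j ∈ Finset.range (k + 1),
    (Real.exp (-K) * (((n : ℝ) + 1) ^ (n + 1) / (Nat.factorial n : ℝ)) *
      (K ^ k / (Nat.factorial k : ℝ)) * ((K + 1) ^ j * α ^ j / (Nat.factorial j : ℝ))) *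
      (x ^ (n + j) * Real.exp (-(B * x))) with hTfdef
  have hexpB : ∀ x : ℝ, Real.exp (-(B * x))
      = Real.exp (-(((n:ℝ)+1) * x)) * Real.exp (-((K+1) * (α * x))) := by
    intro x
    rw [← Real.exp_add]
    congr 1
    rw [hBdef]; ring
  have hTeq : ∀ k, ∀ x ∈ Set.Ioi (0:ℝ), T k x = Tf k x := by
    intro k x _
    rw [hTdef, hTfdef, hDdef]
    simp only
    rw [Finset.mul_sum, Finset.mul_sum, Finset.mul_sum]
    apply Finset.sum_congr rfl
    intro j _
    rw [hexpB x, pow_add, mul_pow]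
    ring
  have hTf_int : ∀ k, IntegrableOn (Tf k) (Set.Ioi 0) := fun k =>
    integrable_finset_sum _ (fun j _ => (integrableOn_pow_exp (n+j) hB).const_mul _)
  have hT_int : ∀ k, IntegrableOn (T k) (Set.Ioi 0) := fun k =>
    (hTf_int k).congr_fun (fun x hx => (hTeq k x hx).symm) measurableSet_Ioi
  have hfact : ∀ j : ℕ,
      ((Nat.factorial j : ℕ) : ℝ) * ((n+j).descFactorial n : ℝ)
        = ((Nat.factorial (n+j) : ℕ) : ℝ) := by
    intro j
    have h := Nat.factorial_mul_descFactorial (Nat.le_add_right n j)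
    rw [Nat.add_sub_cancel_left] at h
    exact_mod_cast congrArg (Nat.cast (R := ℝ)) h
  have hT_val : ∀ k, (∫ x in Set.Ioi (0:ℝ), T k x)
      = (((n : ℝ) + 1) ^ (n + 1) * Real.exp (-K) /
          ((Nat.factorial n : ℝ) * B ^ (n + 1))) * Q n K n k θ₀ := by
    intro k
    rw [setIntegral_congr_fun measurableSet_Ioi (hTeq k), hTfdef]
    simp only
    rw [MeasureTheory.integral_finset_sum _
      (fun j _ => (integrableOn_pow_exp (n+j) hB).const_mul _)]
    have hterm : ∀ j ∈ Finset.range (k+1),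
        (∫ x in Set.Ioi (0:ℝ),
          (Real.exp (-K) * (((n : ℝ) + 1) ^ (n + 1) / (Nat.factorial n : ℝ)) *
            (K ^ k / (Nat.factorial k : ℝ)) * ((K + 1) ^ j * α ^ j / (Nat.factorial j : ℝ))) *
            (x ^ (n + j) * Real.exp (-(B * x))))
        = (((n : ℝ) + 1) ^ (n + 1) * Real.exp (-K) /
            ((Nat.factorial n : ℝ) * B ^ (n + 1))) *
          (K ^ k / (Nat.factorial k : ℝ) * (((n + j).descFactorial n : ℝ) * θ₀ ^ j)) := by
      intro j _
      rw [MeasureTheory.integral_const_mul, integral_pow_exp (n+j) hB]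
      have h1 : ((Nat.factorial n : ℝ)) ≠ 0 := by positivity
      have h2 : ((Nat.factorial k : ℝ)) ≠ 0 := by positivity
      have h3 : ((Nat.factorial j : ℝ)) ≠ 0 := by positivity
      have h4 : ((Nat.factorial (n+j) : ℝ)) ≠ 0 := by positivity
      have hBne : B ≠ 0 := hB.ne'
      rw [hθdef, div_pow, mul_pow α (K+1) j, ← hfact j]
      rw [show n + j + 1 = (n + 1) + j by ring, pow_add B]
      field_simp
    rw [Finset.sum_congr rfl hterm, ← Finset.mul_sum, Q, ← Finset.mul_sum]
    have : ∀ j ∈ Finset.range (k+1),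
        ((n + j).descFactorial n : ℝ) * θ₀ ^ (n + j - n)
          = ((n + j).descFactorial n : ℝ) * θ₀ ^ j := by
      intro j _
      rw [Nat.add_sub_cancel_left]
    rw [Finset.sum_congr rfl this]
  have hT_nonneg : ∀ k, ∀ x ∈ Set.Ioi (0:ℝ), 0 ≤ T k x := by
    intro k x hx
    have hx0 : (0:ℝ) < x := hx
    have hsumn : 0 ≤ ∑ j ∈ Finset.range (k + 1),
        (K + 1) ^ j * (α * x) ^ j / (Nat.factorial j : ℝ) := by
      apply Finset.sum_nonneg
      intro j _
      positivity
    have h3 := hD_nonneg x hx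
    rw [hTdef]
    have hKk : (0:ℝ) ≤ K ^ k := pow_nonneg hK k
    positivity
  have hsumnorm : Summable fun k => ∫ x in Set.Ioi (0:ℝ), ‖T k x‖ := by
    have heq : (fun k => ∫ x in Set.Ioi (0:ℝ), ‖T k x‖)
        = fun k => (((n : ℝ) + 1) ^ (n + 1) * Real.exp (-K) /
          ((Nat.factorial n : ℝ) * B ^ (n + 1))) * Q n K n k θ₀ := by
      funext k
      rw [← hT_val k]
      apply integral_congr_ae
      filter_upwards [ae_restrict_mem measurableSet_Ioi] with x hx
      exact Real.norm_of_nonneg (hT_nonneg k x hx)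
    rw [heq]
    exact (summable_Q hK le_rfl hθabs).mul_left _
  calc (∫ x in Set.Ioi (0:ℝ), D x * W K (α * x))
      = ∫ x in Set.Ioi (0:ℝ), ∑' k, T k x := by simp only [hpt]
    _ = ∑' k, ∫ x in Set.Ioi (0:ℝ), T k x :=
        (MeasureTheory.integral_tsum_of_summable_integral_norm (fun k => hT_int k) hsumnorm).symm
    _ = (((n : ℝ) + 1) ^ (n + 1) * Real.exp (-K) /
          ((Nat.factorial n : ℝ) * B ^ (n + 1))) *
        ∑' k, Q n K n k θ₀ := by
        rw [tsum_congr hT_val, tsum_mul_left]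

end OutageAux

theorem outage_L_N_closed_form (m : ℕ) (hm : 0 < m) (K α : ℝ) (hK : 0 ≤ K) (hα : 0 < α) :
    (∫ x in Set.Ioi (0 : ℝ), fG (m : ℝ) x * ∫ y in Set.Ioo 0 (α * x), fR K y) =
      1 - ((m : ℝ) ^ (m : ℕ) * Real.exp (-K) /
            (Real.Gamma m * ((m : ℝ) + α * (K + 1)) ^ (m : ℕ))) *
        iteratedDeriv (m - 1)
          (fun θ : ℝ => θ ^ (m - 1) * (Real.exp K - θ * Real.exp (K * θ)) / (1 - θ))
          (α * (K + 1) / ((m : ℝ) + α * (K + 1))) := by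
  obtain ⟨n, rfl⟩ : ∃ n, m = n + 1 := ⟨m - 1, (Nat.succ_pred_eq_of_pos hm).symm⟩
  have hB : (0 : ℝ) < ((n : ℝ) + 1) + α * (K + 1) := by positivity
  set θ₀ : ℝ := α * (K + 1) / (((n : ℝ) + 1) + α * (K + 1)) with hθ₀def
  have hθ₀mem : θ₀ ∈ Set.Ioo (-1 : ℝ) 1 := by
    constructor
    · have : 0 ≤ θ₀ := by positivity
      linarith
    · rw [hθ₀def, div_lt_one hB]
      nlinarith [mul_pos hα (by linarith : (0:ℝ) < K + 1)]
  have hcast : ((n + 1 : ℕ) : ℝ) = (n : ℝ) + 1 := by push_cast; ring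
  simp only [Nat.add_sub_cancel, hcast]
  rw [OutageAux.lhs_eq hK hα, OutageAux.iteratedDeriv_g hK le_rfl θ₀ hθ₀mem,
    Real.Gamma_nat_eq_factorial n]
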